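/- Every 1-error-correcting code C over GF(q) of length s can be embedded in a 1-perfect code of length n = (q^{s+1}-1)/(q-1): there exists a 1-perfect code P ⊂ F^n such that C = { x ∈ F^s : (1, x, 0^{n-s-1}) ∈ P }. -/

import Mathlib

variable {F : Type*} [Field F] [Fintype F] [DecidableEq F] {m : ℕ}

def IsProj (α : Fin m → F) : Prop :=
  ∃ i, α i = 1 ∧ ∀ j < i, α j = 0

instance : DecidablePred (IsProj (F := F) (m := m)) :=
  fun α => decidable_of_iff (∃ i, α i = 1 ∧ ∀ j < i, α j = 0) Iff.rfl

/-- The projective points: nonzero vectors with first nonzero coordinate 1. -/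
abbrev PA (F : Type*) [Field F] [Fintype F] [DecidableEq F] (m : ℕ) : Type _ :=
  {α : Fin m → F // IsProj α}

/-- The Hamming code of length (q^m-1)/(q-1). -/
def Hcode (F : Type*) [Field F] [Fintype F] [DecidableEq F] (m : ℕ) : Set (PA F m → F) :=
  {c | ∑ α : PA F m, c α • (α : Fin m → F) = 0}

/-- Zero-extension of a vector of F^m to a word indexed by PA F m. -/
def bar (α : Fin m → F) : PA F m → F :=
  fun β => ∑ i, if (β : Fin m → F) = Pi.single i 1 then α i else 0

/-- The linear δ-component: span of the weight-3 codewords with value 1 at δ. -/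
def Rcomp (δ : PA F m) : Submodule F (PA F m → F) :=
  Submodule.span F {c | c ∈ Hcode F m ∧ hammingNorm c = 3 ∧ c δ = 1}

/-- A 1-perfect code: radius-1 balls around codewords partition the space. -/
def IsPerfect {ι : Type*} [Fintype ι] (P : Set (ι → F)) : Prop :=
  ∀ z : ι → F, ∃! c, c ∈ P ∧ hammingDist z c ≤ 1

/-- A 1-code: radius-1 balls around codewords are pairwise disjoint. -/
def IsOneCode {ι : Type*} [Fintype ι] (C : Set (ι → F)) : Prop :=
  ∀ x ∈ C, ∀ y ∈ C, x ≠ y → ∀ z, ¬(hammingDist x z ≤ 1 ∧ hammingDist y z ≤ 1)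

/-- The radius-1 neighborhood of a set of words. -/
def nbhd {ι : Type*} [Fintype ι] (M : Set (ι → F)) : Set (ι → F) :=
  {y | ∃ x ∈ M, hammingDist x y ≤ 1}

/-- The projective point corresponding to the standard basis vector π^(i). -/
def singleProj (i : Fin m) : PA F m :=
  ⟨Pi.single i 1, i, by simp, fun j hj => Pi.single_eq_of_ne (Fin.ne_of_lt hj) 1⟩

/-- The projective point (1, x). -/
def consProj {s : ℕ} (x : Fin s → F) : PA F (s+1) :=
  ⟨Fin.cons 1 x, 0, by simp, fun j hj => absurd hj (by simp)⟩

namespace Stmt12Aux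

section General
variable {F : Type*} [Field F] [DecidableEq F] {ι : Type*} [Fintype ι] [DecidableEq ι]

lemma hammingNorm_single_le (i : ι) (a : F) : hammingNorm (Pi.single i a : ι → F) ≤ 1 := by
  have h : Finset.filter (fun j => (Pi.single i a : ι → F) j ≠ 0) Finset.univ ⊆ {i} := by
    intro j hj
    simp only [Finset.mem_filter, Finset.mem_univ, true_and] at hj
    simp only [Finset.mem_singleton]
    by_contra hne
    rw [Pi.single_eq_of_ne hne] at hj
    exact hj rfl
  calc hammingNorm (Pi.single i a : ι → F) ≤ ({i} : Finset ι).card := Finset.card_le_card h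
    _ = 1 := Finset.card_singleton i

lemma single_eq_smul (i : ι) (a : F) :
    (Pi.single i a : ι → F) = a • (Pi.single i 1 : ι → F) := by
  ext j
  rcases eq_or_ne j i with rfl | h
  · simp
  · simp [Pi.single_eq_of_ne h]

lemma two_le_norm {u : ι → F} {i j : ι} (hne : i ≠ j) (hi : u i ≠ 0) (hj : u j ≠ 0) :
    2 ≤ hammingNorm u := by
  have h2 : ({i, j} : Finset ι) ⊆ Finset.filter (fun k => u k ≠ 0) Finset.univ := by
    intro k hk
    simp only [Finset.mem_insert, Finset.mem_singleton] at hk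
    simp only [Finset.mem_filter, Finset.mem_univ, true_and]
    rcases hk with rfl | rfl
    · exact hi
    · exact hj
  calc 2 = ({i, j} : Finset ι).card := by
          rw [Finset.card_insert_of_notMem (by simpa using hne), Finset.card_singleton]
    _ ≤ hammingNorm u := Finset.card_le_card h2

lemma norm_le_one_decomp [Nonempty ι] {u : ι → F} (h : hammingNorm u ≤ 1) :
    ∃ (i : ι) (a : F), u = (Pi.single i a : ι → F) := by
  rcases eq_or_ne u 0 with rfl | hu
  · exact ⟨Classical.arbitrary ι, 0, by simp⟩
  · obtain ⟨i, hi⟩ : ∃ i, u i ≠ 0 := by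
      by_contra hc
      push_neg at hc
      exact hu (funext hc)
    refine ⟨i, u i, ?_⟩
    ext j
    rcases eq_or_ne j i with rfl | hne
    · simp
    · simp only [Pi.single_eq_of_ne hne]
      by_contra hj
      have := two_le_norm (hne.symm) hi hj
      omega

end General

section PAlemmas
variable {F : Type*} [Field F] [Fintype F] [DecidableEq F] {m : ℕ}

lemma PA.ne_zero (p : PA F m) : (p : Fin m → F) ≠ 0 := by
  obtain ⟨i, hi1, _⟩ := p.2
  intro h
  have := congrFun h i
  rw [hi1] at this
  simp at this

lemma PA.smul_eq_smul {p q : PA F m} {a b : F} (ha : a ≠ 0)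
    (h : a • (p : Fin m → F) = b • (q : Fin m → F)) : p = q ∧ a = b := by
  obtain ⟨i, hi1, hi0⟩ := p.2
  obtain ⟨j, hj1, hj0⟩ := q.2
  have hb : b ≠ 0 := by
    rintro rfl
    rw [zero_smul] at h
    have := congrFun h i
    simp only [Pi.smul_apply, smul_eq_mul, Pi.zero_apply] at this
    rw [hi1, mul_one] at this
    exact ha this
  have hij : i = j := by
    rcases lt_trichotomy i j with hlt | heq | hlt
    · have := congrFun h i
      simp only [Pi.smul_apply, smul_eq_mul] at this
      rw [hi1, mul_one, hj0 i hlt, mul_zero] at this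
      exact absurd this ha
    · exact heq
    · have := congrFun h j
      simp only [Pi.smul_apply, smul_eq_mul] at this
      rw [hj1, mul_one, hi0 j hlt, mul_zero] at this
      exact absurd this.symm hb
  subst hij
  have hab : a = b := by
    have := congrFun h i
    simp only [Pi.smul_apply, smul_eq_mul] at this
    rwa [hi1, mul_one, hj1, mul_one] at this
  subst hab
  exact ⟨Subtype.ext (smul_right_injective (Fin m → F) ha h), rfl⟩

lemma exists_rep {v : Fin m → F} (hv : v ≠ 0) :
    ∃ (p : PA F m) (a : F), a ≠ 0 ∧ v = a • (p : Fin m → F) := by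
  classical
  have hne : (Finset.filter (fun i => v i ≠ 0) Finset.univ).Nonempty := by
    obtain ⟨i, hi⟩ : ∃ i, v i ≠ 0 := by
      by_contra hc; push_neg at hc; exact hv (funext hc)
    exact ⟨i, by simp [hi]⟩
  set S := Finset.filter (fun i => v i ≠ 0) Finset.univ with hS
  set i0 := S.min' hne with hi0def
  have hi0 : v i0 ≠ 0 := by
    have := S.min'_mem hne
    simpa [hS] using this
  refine ⟨⟨(v i0)⁻¹ • v, i0, by simp [hi0], ?_⟩, v i0, hi0, ?_⟩
  · intro j hj
    have hjS : j ∉ S := fun hjS => absurd (S.min'_le j hjS) (not_le.mpr hj)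
    have : v j = 0 := by simpa [hS] using hjS
    simp [this]
  · show v = v i0 • ((v i0)⁻¹ • v)
    rw [smul_smul, mul_inv_cancel₀ hi0, one_smul]

/-- The syndrome map. -/
def syn (F : Type*) [Field F] [Fintype F] [DecidableEq F] (m : ℕ) :
    (PA F m → F) →ₗ[F] (Fin m → F) :=
  Fintype.linearCombination F (fun α : PA F m => (α : Fin m → F))

lemma syn_apply (c : PA F m → F) : syn F m c = ∑ α : PA F m, c α • (α : Fin m → F) := rfl

lemma mem_Hcode_iff {c : PA F m → F} : c ∈ Hcode F m ↔ syn F m c = 0 := Iff.rfl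

lemma syn_single (p : PA F m) (μ : F) :
    syn F m (Pi.single p μ) = μ • (p : Fin m → F) :=
  Fintype.linearCombination_apply_single F _ p μ

lemma Hperfect [Nonempty (PA F m)] (z : PA F m → F) :
    ∃! c : PA F m → F, syn F m c = 0 ∧ hammingDist z c ≤ 1 := by
  rcases eq_or_ne (syn F m z) 0 with hv | hv
  · refine ⟨z, ⟨hv, by simp⟩, ?_⟩
    rintro c' ⟨hc1, hc2⟩
    have hnorm : hammingNorm (z - c') ≤ 1 := by
      rwa [hammingDist_comm, hammingDist_eq_hammingNorm, neg_add_eq_sub] at hc2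
    obtain ⟨i, a, hia⟩ := norm_le_one_decomp hnorm
    have hsyn : a • (i : Fin m → F) = 0 := by
      rw [← syn_single, ← hia, map_sub, hv, hc1, sub_zero]
    have ha : a = 0 := by
      rcases smul_eq_zero.mp hsyn with h | h
      · exact h
      · exact absurd h (PA.ne_zero i)
    have hz : z - c' = 0 := by rw [hia, ha]; simp
    exact (sub_eq_zero.mp hz).symm
  · obtain ⟨p, a, ha, hrep⟩ := exists_rep hv
    refine ⟨z - Pi.single p a, ⟨?_, ?_⟩, ?_⟩
    · rw [map_sub, syn_single, ← hrep, sub_self]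
    · rw [hammingDist_comm, hammingDist_eq_hammingNorm, neg_add_eq_sub]
      simpa using hammingNorm_single_le p a
    · rintro c' ⟨hc1, hc2⟩
      have hnorm : hammingNorm (z - c') ≤ 1 := by
        rwa [hammingDist_comm, hammingDist_eq_hammingNorm, neg_add_eq_sub] at hc2
      obtain ⟨q, b, hqb⟩ := norm_le_one_decomp hnorm
      have hsyn : b • (q : Fin m → F) = a • (p : Fin m → F) := by
        rw [← syn_single, ← hqb, map_sub, hc1, sub_zero, hrep]
      have hb : b ≠ 0 := by
        rintro rfl
        rw [zero_smul] at hsyn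
        rcases smul_eq_zero.mp hsyn.symm with h | h
        · exact ha h
        · exact PA.ne_zero p h
      obtain ⟨rfl, rfl⟩ := PA.smul_eq_smul hb hsyn
      have : c' = z - Pi.single q b := by
        rw [← hqb]; ring
      rw [this]

end PAlemmas
end Stmt12Aux
namespace Stmt12Aux

section General2
variable {F : Type*} [Field F] [DecidableEq F] {ι : Type*} [Fintype ι] [DecidableEq ι]

lemma single_add' (i : ι) (a b : F) :
    (Pi.single i a : ι → F) + Pi.single i b = Pi.single i (a + b) := by
  ext j
  rcases eq_or_ne j i with rfl | h
  · simp
  · simp [Pi.single_eq_of_ne h]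

lemma single_sub' (i : ι) (a b : F) :
    (Pi.single i a : ι → F) - Pi.single i b = Pi.single i (a - b) := by
  ext j
  rcases eq_or_ne j i with rfl | h
  · simp
  · simp [Pi.single_eq_of_ne h]

/-- From a 1-code separation property, distance at least 3. -/
lemma three_le_dist {x y : ι → F} (hxy : x ≠ y)
    (h : ∀ z, ¬(hammingDist x z ≤ 1 ∧ hammingDist y z ≤ 1)) : 3 ≤ hammingDist x y := by
  by_contra hlt
  push_neg at hlt
  obtain ⟨j, hj⟩ : ∃ j, x j ≠ y j := by
    by_contra hc; push_neg at hc; exact hxy (funext hc)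
  set z := Function.update x j (y j) with hz
  have h1 : hammingDist x z ≤ 1 := by
    have hsub : Finset.filter (fun k => x k ≠ z k) Finset.univ ⊆ {j} := by
      intro k hk
      simp only [Finset.mem_filter, Finset.mem_univ, true_and] at hk
      simp only [Finset.mem_singleton]
      by_contra hne
      rw [hz, Function.update_of_ne hne] at hk
      exact hk rfl
    calc hammingDist x z ≤ ({j} : Finset ι).card := Finset.card_le_card hsub
      _ = 1 := rfl
  have h2 : hammingDist y z ≤ 1 := by
    have hsub : Finset.filter (fun k => y k ≠ z k) Finset.univ ⊆
        (Finset.filter (fun k => x k ≠ y k) Finset.univ).erase j := by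
      intro k hk
      simp only [Finset.mem_filter, Finset.mem_univ, true_and] at hk
      rcases eq_or_ne k j with rfl | hne
      · rw [hz, Function.update_self] at hk
        exact absurd rfl hk
      · rw [hz, Function.update_of_ne hne] at hk
        exact Finset.mem_erase.mpr ⟨hne, by
          simp only [Finset.mem_filter, Finset.mem_univ, true_and]
          exact fun he => hk (by rw [he])⟩
    have hj' : j ∈ Finset.filter (fun k => x k ≠ y k) Finset.univ := by
      simp [hj]
    calc hammingDist y z
        ≤ ((Finset.filter (fun k => x k ≠ y k) Finset.univ).erase j).card :=
          Finset.card_le_card hsub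
      _ = hammingDist x y - 1 := by rw [Finset.card_erase_of_mem hj']; rfl
      _ ≤ 1 := by
          have : hammingDist x y ≤ 2 := by omega
          omega
  exact h z ⟨h1, h2⟩

end General2

section PAlemmas2
variable {F : Type*} [Field F] [Fintype F] [DecidableEq F] {m : ℕ}

lemma coe_singleProj (i : Fin m) : ((singleProj i : PA F m) : Fin m → F) = Pi.single i 1 := rfl

lemma eq_singleProj_iff {β : PA F m} {i : Fin m} :
    (β : Fin m → F) = Pi.single i 1 ↔ β = singleProj i := by
  rw [← coe_singleProj]
  exact ⟨fun h => Subtype.ext h, fun h => congrArg _ h⟩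

lemma bar_eq_sum (α : Fin m → F) :
    bar α = ∑ i, (Pi.single (singleProj i : PA F m) (α i) : PA F m → F) := by
  funext β
  rw [Finset.sum_apply]
  unfold bar
  refine Finset.sum_congr rfl fun i _ => ?_
  rw [Pi.single_apply]
  exact if_congr eq_singleProj_iff rfl rfl

lemma syn_bar (α : Fin m → F) : syn F m (bar α) = α := by
  rw [bar_eq_sum, map_sum]
  have : ∀ i : Fin m, syn F m (Pi.single (singleProj i : PA F m) (α i)) =
      Pi.single i (α i) := by
    intro i
    rw [syn_single, coe_singleProj, ← single_eq_smul]
  rw [Finset.sum_congr rfl fun i _ => this i]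
  exact Finset.univ_sum_single α

lemma Rcomp_le_ker (δ : PA F m) : Rcomp δ ≤ LinearMap.ker (syn F m) := by
  rw [Rcomp, Submodule.span_le]
  rintro c ⟨hc, -, -⟩
  exact LinearMap.mem_ker.mpr hc

/-- Construction of a weight-3 codeword fixing a prescribed pair. -/
lemma exists_w3 {δ β : PA F m} (hne : δ ≠ β) {a μ : F} (ha : a ≠ 0) (hμ : μ ≠ 0) :
    ∃ w ∈ Rcomp δ,
      hammingNorm ((Pi.single δ a : PA F m → F) + Pi.single β μ - w) ≤ 1 := by
  have hv : a • (δ : Fin m → F) + μ • (β : Fin m → F) ≠ 0 := by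
    intro h
    have : a • (δ : Fin m → F) = (-μ) • (β : Fin m → F) := by
      rw [neg_smul]
      linear_combination (norm := module) h
    exact hne (PA.smul_eq_smul ha this).1
  obtain ⟨γ, ν, hν, hrep⟩ := exists_rep hv
  have hγδ : γ ≠ δ := by
    rintro rfl
    have : μ • (β : Fin m → F) = (ν - a) • (γ : Fin m → F) := by
      rw [sub_smul]
      linear_combination (norm := module) hrep
    exact hne ((PA.smul_eq_smul hμ this).1).symm
  have hγβ : γ ≠ β := by
    rintro rfl
    have : a • (δ : Fin m → F) = (ν - μ) • (γ : Fin m → F) := by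
      rw [sub_smul]
      linear_combination (norm := module) hrep
    exact hne (PA.smul_eq_smul ha this).1
  set w : PA F m → F := Pi.single δ a + Pi.single β μ - Pi.single γ ν with hw
  have hsynw : syn F m w = 0 := by
    rw [hw, map_sub, map_add, syn_single, syn_single, syn_single, ← hrep, sub_self]
  have hwδ : w δ = a := by
    rw [hw]
    simp [Pi.single_eq_of_ne hne, Pi.single_eq_of_ne hγδ.symm]
  have hwβ : w β = μ := by
    rw [hw]
    simp [Pi.single_eq_of_ne hne.symm, Pi.single_eq_of_ne hγβ.symm]
  have hwγ : w γ = -ν := by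
    rw [hw]
    simp [Pi.single_eq_of_ne hγδ, Pi.single_eq_of_ne hγβ]
  have hwother : ∀ p : PA F m, p ≠ δ → p ≠ β → p ≠ γ → w p = 0 := by
    intro p h1 h2 h3
    rw [hw]
    simp [Pi.single_eq_of_ne h1, Pi.single_eq_of_ne h2, Pi.single_eq_of_ne h3]
  have hnorm : hammingNorm w = 3 := by
    have hset : Finset.filter (fun p => w p ≠ 0) Finset.univ = {δ, β, γ} := by
      ext p
      simp only [Finset.mem_filter, Finset.mem_univ, true_and, Finset.mem_insert,
        Finset.mem_singleton]
      constructor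
      · intro hp
        by_contra hc
        push_neg at hc
        exact hp (hwother p hc.1 hc.2.1 hc.2.2)
      · rintro (rfl | rfl | rfl)
        · rw [hwδ]; exact ha
        · rw [hwβ]; exact hμ
        · rw [hwγ]; simpa using hν
    rw [hammingNorm, hset]
    rw [Finset.card_insert_of_notMem (by simp [hne, hγδ.symm]),
      Finset.card_insert_of_notMem (by simp [hγβ.symm]), Finset.card_singleton]
  have hmem : w ∈ Rcomp δ := by
    have h0 : a⁻¹ • w ∈ {c | c ∈ Hcode F m ∧ hammingNorm c = 3 ∧ c δ = 1} := by
      refine ⟨?_, ?_, ?_⟩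
      · rw [mem_Hcode_iff, map_smul, hsynw, smul_zero]
      · rw [hammingNorm_smul (fun _ => smul_right_injective F (inv_ne_zero ha)) w]
        exact hnorm
      · simp [hwδ, inv_mul_cancel₀ ha]
    have : w = a • (a⁻¹ • w) := by rw [smul_smul, mul_inv_cancel₀ ha, one_smul]
    rw [this]
    exact Submodule.smul_mem _ a (Submodule.subset_span h0)
  refine ⟨w, hmem, ?_⟩
  have : (Pi.single δ a : PA F m → F) + Pi.single β μ - w = Pi.single γ ν := by
    rw [hw]; abel
  rw [this]
  exact hammingNorm_single_le γ ν

/-- Lemma A : the component switching property. -/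
lemma lemA (δ : PA F m) {r : PA F m → F} (hr : r ∈ Rcomp δ) (l l' μ : F) (β : PA F m) :
    ∃ r' ∈ Rcomp δ,
      hammingNorm (r + Pi.single δ l + Pi.single β μ - (r' + Pi.single δ l')) ≤ 1 := by
  rcases eq_or_ne β δ with rfl | hβδ
  · refine ⟨r, hr, ?_⟩
    have : r + Pi.single β l + Pi.single β μ - (r + Pi.single β l') =
        Pi.single β (l + μ - l') := by
      rw [← single_sub', ← single_add']; abel
    rw [this]
    exact hammingNorm_single_le β _
  rcases eq_or_ne μ 0 with rfl | hμ
  · refine ⟨r, hr, ?_⟩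
    have : r + Pi.single δ l + Pi.single β 0 - (r + Pi.single δ l') =
        Pi.single δ (l - l') := by
      rw [← single_sub']
      simp only [Pi.single_zero]
      abel
    rw [this]
    exact hammingNorm_single_le δ _
  rcases eq_or_ne l l' with rfl | hll
  · refine ⟨r, hr, ?_⟩
    have : r + Pi.single δ l + Pi.single β μ - (r + Pi.single δ l) = Pi.single β μ := by
      abel
    rw [this]
    exact hammingNorm_single_le β _
  · have hsub : l - l' ≠ 0 := sub_ne_zero.mpr hll
    obtain ⟨w, hwmem, hwnorm⟩ := exists_w3 (hβδ.symm) hsub hμ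
    refine ⟨r + w, Submodule.add_mem _ hr hwmem, ?_⟩
    have : r + Pi.single δ l + Pi.single β μ - (r + w + Pi.single δ l') =
        (Pi.single δ (l - l') : PA F m → F) + Pi.single β μ - w := by
      rw [← single_sub']; abel
    rw [this]
    exact hwnorm

end PAlemmas2
end Stmt12Aux
namespace Stmt12Aux

section Psi
variable {F : Type*} [Field F] [Fintype F] [DecidableEq F] {m : ℕ}

open Classical in
/-- The auxiliary functional used for the disjointness argument. -/
noncomputable def psi (W E : Submodule F (Fin m → F)) :
    (PA F m → F) →ₗ[F] ((Fin m → F) ⧸ W) :=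
  Fintype.linearCombination F
    (fun p : PA F m => if (p : Fin m → F) ∈ E then W.mkQ (p : Fin m → F) else 0)

open Classical in
lemma psi_single (W E : Submodule F (Fin m → F)) (p : PA F m) (a : F) :
    psi W E (Pi.single p a) =
      a • (if (p : Fin m → F) ∈ E then W.mkQ (p : Fin m → F) else 0) := by
  rw [psi]
  rw [Fintype.linearCombination_apply_single F _ p a]

lemma psi_vanish_aux {W E : Submodule F (Fin m → F)} (hWE : W ≤ E) {c : PA F m → F}
    {δ β γ : PA F m} (hδβ : δ ≠ β) (hδγ : δ ≠ γ) (hβγ : β ≠ γ)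
    (hδW : (δ : Fin m → F) ∈ W)
    (hsupp : ∀ p, c p ≠ 0 → p = δ ∨ p = β ∨ p = γ)
    (hsyn : syn F m c = 0) : psi W E c = 0 := by
  classical
  set q : PA F m → (Fin m → F) ⧸ W :=
    fun p => if (p : Fin m → F) ∈ E then W.mkQ (p : Fin m → F) else 0 with hq
  have hpsi_apply : psi W E c = ∑ p : PA F m, c p • q p := by
    rw [psi, Fintype.linearCombination_apply]
  have hsub : ({δ, β, γ} : Finset (PA F m)) ⊆ Finset.univ := Finset.subset_univ _
  have hzero : ∀ p ∈ Finset.univ, p ∉ ({δ, β, γ} : Finset (PA F m)) → c p • q p = 0 := by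
    intro p _ hp
    simp only [Finset.mem_insert, Finset.mem_singleton] at hp
    push_neg at hp
    have : c p = 0 := by
      by_contra hcp
      rcases hsupp p hcp with h | h | h
      · exact hp.1 h
      · exact hp.2.1 h
      · exact hp.2.2 h
    rw [this, zero_smul]
  have hzero' : ∀ p ∈ Finset.univ, p ∉ ({δ, β, γ} : Finset (PA F m)) →
      c p • (p : Fin m → F) = 0 := by
    intro p _ hp
    simp only [Finset.mem_insert, Finset.mem_singleton] at hp
    push_neg at hp
    have : c p = 0 := by
      by_contra hcp
      rcases hsupp p hcp with h | h | h
      · exact hp.1 h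
      · exact hp.2.1 h
      · exact hp.2.2 h
    rw [this, zero_smul]
  have hδmem : δ ∉ ({β, γ} : Finset (PA F m)) := by simp [hδβ, hδγ]
  have hβmem : β ∉ ({γ} : Finset (PA F m)) := by simp [hβγ]
  have hsyn3 : c δ • (δ : Fin m → F) + c β • (β : Fin m → F) + c γ • (γ : Fin m → F) = 0 := by
    have := (Finset.sum_subset hsub hzero').symm
    rw [syn_apply] at hsyn
    rw [← hsyn, this, Finset.sum_insert hδmem, Finset.sum_insert hβmem,
      Finset.sum_singleton, add_assoc]
  have hpsi3 : psi W E c = c δ • q δ + c β • q β + c γ • q γ := by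
    rw [hpsi_apply, ← Finset.sum_subset hsub hzero, Finset.sum_insert hδmem,
      Finset.sum_insert hβmem, Finset.sum_singleton, add_assoc]
  have hδE : (δ : Fin m → F) ∈ E := hWE hδW
  have hqδ : q δ = 0 := by
    rw [hq]
    simp only [if_pos hδE, Submodule.mkQ_apply]
    exact (Submodule.Quotient.mk_eq_zero W).mpr hδW
  rw [hpsi3, hqδ, smul_zero, zero_add]
  by_cases hβE : (β : Fin m → F) ∈ E <;> by_cases hγE : (γ : Fin m → F) ∈ E
  · rw [hq]
    simp only [if_pos hβE, if_pos hγE, Submodule.mkQ_apply]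
    rw [← Submodule.Quotient.mk_smul, ← Submodule.Quotient.mk_smul,
      ← Submodule.Quotient.mk_add]
    rw [Submodule.Quotient.mk_eq_zero]
    have : c β • (β : Fin m → F) + c γ • (γ : Fin m → F) = -(c δ • (δ : Fin m → F)) := by
      linear_combination (norm := module) hsyn3
    rw [this]
    exact neg_mem (Submodule.smul_mem W _ hδW)
  · rcases eq_or_ne (c γ) 0 with hcγ | hcγ
    · have hβW : c β • (β : Fin m → F) ∈ W := by
        have : c β • (β : Fin m → F) = -(c δ • (δ : Fin m → F)) := by
          rw [hcγ, zero_smul, add_zero] at hsyn3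
          linear_combination (norm := module) hsyn3
        rw [this]
        exact neg_mem (Submodule.smul_mem W _ hδW)
      rw [hq]
      simp only [if_pos hβE, Submodule.mkQ_apply]
      rw [hcγ, zero_smul, add_zero, ← Submodule.Quotient.mk_smul,
        Submodule.Quotient.mk_eq_zero]
      exact hβW
    · exfalso
      apply hγE
      have h1 : c γ • (γ : Fin m → F) = -(c δ • (δ : Fin m → F)) - c β • (β : Fin m → F) := by
        linear_combination (norm := module) hsyn3
      have h2 : (γ : Fin m → F) = (c γ)⁻¹ • (c γ • (γ : Fin m → F)) := by
        rw [smul_smul, inv_mul_cancel₀ hcγ, one_smul]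
      rw [h2, h1]
      exact Submodule.smul_mem E _ (sub_mem (neg_mem (Submodule.smul_mem E _ hδE))
        (Submodule.smul_mem E _ hβE))
  · rcases eq_or_ne (c β) 0 with hcβ | hcβ
    · have hγW : c γ • (γ : Fin m → F) ∈ W := by
        have : c γ • (γ : Fin m → F) = -(c δ • (δ : Fin m → F)) := by
          rw [hcβ, zero_smul] at hsyn3
          linear_combination (norm := module) hsyn3
        rw [this]
        exact neg_mem (Submodule.smul_mem W _ hδW)
      rw [hq]
      simp only [if_pos hγE, Submodule.mkQ_apply]
      rw [hcβ, zero_smul, zero_add, ← Submodule.Quotient.mk_smul,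
        Submodule.Quotient.mk_eq_zero]
      exact hγW
    · exfalso
      apply hβE
      have h1 : c β • (β : Fin m → F) = -(c δ • (δ : Fin m → F)) - c γ • (γ : Fin m → F) := by
        linear_combination (norm := module) hsyn3
      have h2 : (β : Fin m → F) = (c β)⁻¹ • (c β • (β : Fin m → F)) := by
        rw [smul_smul, inv_mul_cancel₀ hcβ, one_smul]
      rw [h2, h1]
      exact Submodule.smul_mem E _ (sub_mem (neg_mem (Submodule.smul_mem E _ hδE))
        (Submodule.smul_mem E _ hγE))
  · rw [hq]
    simp only [if_neg hβE, if_neg hγE, smul_zero, add_zero]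

lemma Rcomp_le_ker_psi {W E : Submodule F (Fin m → F)} (hWE : W ≤ E) {δ : PA F m}
    (hδW : (δ : Fin m → F) ∈ W) : Rcomp δ ≤ LinearMap.ker (psi W E) := by
  rw [Rcomp, Submodule.span_le]
  rintro c ⟨hc, hn, hδ1⟩
  rw [SetLike.mem_coe, LinearMap.mem_ker]
  have hδsupp : δ ∈ Finset.filter (fun p => c p ≠ 0) Finset.univ := by
    simp only [Finset.mem_filter, Finset.mem_univ, true_and, hδ1]
    exact one_ne_zero
  obtain ⟨p1, p2, p3, h12, h13, h23, hset⟩ := Finset.card_eq_three.mp hn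
  have hsupp : ∀ p, c p ≠ 0 → p = p1 ∨ p = p2 ∨ p = p3 := by
    intro p hp
    have : p ∈ Finset.filter (fun p => c p ≠ 0) Finset.univ := by
      simp [hp]
    rw [hset] at this
    simpa using this
  rw [hset] at hδsupp
  simp only [Finset.mem_insert, Finset.mem_singleton] at hδsupp
  rcases hδsupp with rfl | rfl | rfl
  · exact psi_vanish_aux hWE h12 h13 h23 hδW hsupp hc
  · refine psi_vanish_aux hWE (Ne.symm h12) h23 h13 hδW ?_ hc
    intro p hp
    rcases hsupp p hp with h | h | h
    · exact Or.inr (Or.inl h)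
    · exact Or.inl h
    · exact Or.inr (Or.inr h)
  · refine psi_vanish_aux hWE (Ne.symm h13) (Ne.symm h23) h12 hδW ?_ hc
    intro p hp
    rcases hsupp p hp with h | h | h
    · exact Or.inr (Or.inl h)
    · exact Or.inr (Or.inr h)
    · exact Or.inl h

end Psi
end Stmt12Aux
namespace Stmt12Aux

section Main
variable {F : Type*} [Field F] [Fintype F] [DecidableEq F] {s : ℕ}

lemma bar_sub {m : ℕ} (α α' : Fin m → F) : bar α - bar α' = bar (α - α') := by
  rw [bar_eq_sum, bar_eq_sum, bar_eq_sum, ← Finset.sum_sub_distrib]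
  refine Finset.sum_congr rfl fun i _ => ?_
  rw [single_sub', Pi.sub_apply]

/-- The Hamming codeword associated to `x`. -/
noncomputable def cword (x : Fin s → F) : PA F (s+1) → F :=
  bar (Fin.cons 1 x) - Pi.single (consProj x) 1

lemma coe_consProj (x : Fin s → F) :
    ((consProj x : PA F (s+1)) : Fin (s+1) → F) = Fin.cons 1 x := rfl

lemma consProj_inj {x y : Fin s → F} (h : consProj x = consProj y) : x = y := by
  have := congrArg (fun p : PA F (s+1) => (p : Fin (s+1) → F)) h
  funext j
  have := congrFun this j.succ
  simpa [coe_consProj, Fin.cons_succ] using this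

lemma syn_cword (x : Fin s → F) : syn F (s+1) (cword x) = 0 := by
  rw [cword, map_sub, syn_bar, syn_single, coe_consProj, one_smul, sub_self]

lemma lemD {x y : Fin s → F} (hdist : 3 ≤ hammingDist x y)
    {r r' : PA F (s+1) → F} (hr : r ∈ Rcomp (consProj x)) (hr' : r' ∈ Rcomp (consProj y))
    (heq : cword x + r = cword y + r') : False := by
  classical
  have hdist' : 3 ≤ (Finset.filter (fun j => x j ≠ y j) Finset.univ).card := hdist
  obtain ⟨t, hts, htc⟩ := Finset.exists_subset_card_eq hdist'
  obtain ⟨j0, j1, j2, h01, h02, h12, ht⟩ := Finset.card_eq_three.mp htc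
  have hj : ∀ j ∈ t, x j ≠ y j := fun j hjt =>
    (Finset.mem_filter.mp (hts hjt)).2
  have hj0 : x j0 ≠ y j0 := hj j0 (by rw [ht]; simp)
  have hj1 : x j1 ≠ y j1 := hj j1 (by rw [ht]; simp)
  have hj2 : x j2 ≠ y j2 := hj j2 (by rw [ht]; simp)
  set i0 : Fin (s+1) := j0.succ with hi0
  set i1 : Fin (s+1) := j1.succ with hi1
  set i2 : Fin (s+1) := j2.succ with hi2
  have h10 : i1 ≠ i0 := fun h => h01 (Fin.succ_injective s h).symm
  have h20 : i2 ≠ i0 := fun h => h02 (Fin.succ_injective s h).symm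
  have h21 : i2 ≠ i1 := fun h => h12 (Fin.succ_injective s h).symm
  set cx : Fin (s+1) → F := Fin.cons 1 x with hcx
  set cy : Fin (s+1) → F := Fin.cons 1 y with hcy
  set d : Fin (s+1) → F := cx - cy with hd
  have hd0 : d 0 = 0 := by
    rw [hd, Pi.sub_apply, hcx, hcy, Fin.cons_zero, Fin.cons_zero, sub_self]
  have hdsucc : ∀ j : Fin s, d j.succ = x j - y j := by
    intro j
    rw [hd, Pi.sub_apply, hcx, hcy, Fin.cons_succ, Fin.cons_succ]
  have hdi0 : d i0 ≠ 0 := by rw [hi0, hdsucc]; exact sub_ne_zero.mpr hj0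
  have hdi1 : d i1 ≠ 0 := by rw [hi1, hdsucc]; exact sub_ne_zero.mpr hj1
  have hdi2 : d i2 ≠ 0 := by rw [hi2, hdsucc]; exact sub_ne_zero.mpr hj2
  set W : Submodule F (Fin (s+1) → F) := Submodule.span F {cx, cy} with hW
  set E : Submodule F (Fin (s+1) → F) :=
    Submodule.span F {cx, cy, (Pi.single i0 1 : Fin (s+1) → F)} with hE
  have hWE : W ≤ E := by
    rw [hW, hE]
    apply Submodule.span_mono
    intro v hv
    simp only [Set.mem_insert_iff, Set.mem_singleton_iff] at hv ⊢
    tauto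
  have hxW : cx ∈ W := Submodule.subset_span (by simp)
  have hyW : cy ∈ W := Submodule.subset_span (by simp)
  have hxcoe : ((consProj x : PA F (s+1)) : Fin (s+1) → F) = cx := rfl
  have hycoe : ((consProj y : PA F (s+1)) : Fin (s+1) → F) = cy := rfl
  have hpsir : psi W E r = 0 := by
    have := Rcomp_le_ker_psi (m := s+1) hWE (δ := consProj x) (by rw [hxcoe]; exact hxW) hr
    exact LinearMap.mem_ker.mp this
  have hpsir' : psi W E r' = 0 := by
    have := Rcomp_le_ker_psi (m := s+1) hWE (δ := consProj y) (by rw [hycoe]; exact hyW) hr'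
    exact LinearMap.mem_ker.mp this
  have hcwpsi : ∀ (z : Fin s → F), ((consProj z : PA F (s+1)) : Fin (s+1) → F) ∈ W →
      psi W E (cword z) = psi W E (bar (Fin.cons 1 z)) := by
    intro z hz
    rw [cword, map_sub, psi_single, if_pos (hWE hz), Submodule.mkQ_apply,
      (Submodule.Quotient.mk_eq_zero W).mpr hz, smul_zero, sub_zero]
  have hkey : psi W E (bar cx) = psi W E (bar cy) := by
    have h1 := congrArg (psi W E) heq
    rw [map_add, map_add, hpsir, hpsir', add_zero, add_zero] at h1
    rw [← hcwpsi x (by rw [hxcoe]; exact hxW), ← hcwpsi y (by rw [hycoe]; exact hyW)]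
    exact h1
  have hbd : psi W E (bar d) = 0 := by
    rw [hd, ← bar_sub, map_sub, hkey, sub_self]
  -- compute psi (bar d)
  set T : Finset (Fin (s+1)) :=
    Finset.filter (fun i => (Pi.single i 1 : Fin (s+1) → F) ∈ E) Finset.univ with hT
  set u : Fin (s+1) → F := ∑ i ∈ T, d i • (Pi.single i 1 : Fin (s+1) → F) with hu
  have hbd2 : psi W E (bar d) = W.mkQ u := by
    rw [bar_eq_sum, map_sum]
    have hterm : ∀ i : Fin (s+1), psi W E (Pi.single (singleProj i : PA F (s+1)) (d i)) =
        if (Pi.single i 1 : Fin (s+1) → F) ∈ E then d i • W.mkQ (Pi.single i 1) else 0 := by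
      intro i
      rw [psi_single, coe_singleProj, smul_ite, smul_zero]
    rw [Finset.sum_congr rfl fun i _ => hterm i]
    rw [← Finset.sum_filter, ← hT, hu, map_sum]
    refine Finset.sum_congr rfl fun i _ => ?_
    rw [map_smul]
  have huW : u ∈ W := by
    have : W.mkQ u = 0 := by rw [← hbd2, hbd]
    rwa [Submodule.mkQ_apply, Submodule.Quotient.mk_eq_zero] at this
  have huval : ∀ j : Fin (s+1), u j = if j ∈ T then d j else 0 := by
    intro j
    rw [hu, Finset.sum_apply]
    have : ∀ i ∈ T, (d i • (Pi.single i 1 : Fin (s+1) → F)) j =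
        if j = i then d i else 0 := by
      intro i _
      rw [Pi.smul_apply, Pi.single_apply, smul_eq_mul, mul_ite, mul_one, mul_zero]
    rw [Finset.sum_congr rfl this, Finset.sum_ite_eq T j d]
  obtain ⟨a, b, hab⟩ := Submodule.mem_span_pair.mp (by rw [hW] at huW; exact huW)
  have hu0 : u 0 = 0 := by
    rw [huval 0]
    split
    · exact hd0
    · rfl
  have hab0 : a + b = 0 := by
    have := congrFun hab 0
    rw [hu0] at this
    simp only [Pi.add_apply, Pi.smul_apply, smul_eq_mul] at this
    simp only [hcx, hcy, Fin.cons_zero, mul_one] at this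
    exact this
  have hb : b = -a := by linear_combination hab0
  have hT0 : i0 ∈ T := by
    rw [hT]
    simp only [Finset.mem_filter, Finset.mem_univ, true_and]
    exact Submodule.subset_span (by simp)
  have hcxsucc : ∀ j : Fin s, cx j.succ = x j := by
    intro j; rw [hcx, Fin.cons_succ]
  have hcysucc : ∀ j : Fin s, cy j.succ = y j := by
    intro j; rw [hcy, Fin.cons_succ]
  have ha : a = 1 := by
    have h := congrFun hab i0
    rw [huval i0, if_pos hT0] at h
    simp only [Pi.add_apply, Pi.smul_apply, smul_eq_mul] at h
    rw [hi0, hcxsucc, hcysucc, hdsucc, hb] at h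
    have h2 : (a - 1) * (x j0 - y j0) = 0 := by linear_combination h
    rcases mul_eq_zero.mp h2 with h3 | h3
    · linear_combination h3
    · exact absurd h3 (sub_ne_zero.mpr hj0)
  have hud : ∀ j : Fin (s+1), u j = d j := by
    intro j
    have h := congrFun hab j
    simp only [Pi.add_apply, Pi.smul_apply, smul_eq_mul] at h
    rw [hb, ha] at h
    rw [← h, hd, Pi.sub_apply]
    ring
  have hTall : ∀ j : Fin (s+1), d j ≠ 0 → j ∈ T := by
    intro j hdj
    by_contra hjT
    have h1 : u j = 0 := by rw [huval j, if_neg hjT]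
    rw [hud j] at h1
    exact hdj h1
  have hE1 : (Pi.single i1 1 : Fin (s+1) → F) ∈ E := by
    have := hTall i1 hdi1
    rw [hT] at this
    simpa using this
  rw [hE] at hE1
  obtain ⟨a1, z, hz, hzeq⟩ := Submodule.mem_span_insert.mp hE1
  obtain ⟨b1, c1, hbc⟩ := Submodule.mem_span_pair.mp hz
  rw [← hbc] at hzeq
  -- hzeq : Pi.single i1 1 = a1 • cx + (b1 • cy + c1 • Pi.single i0 1)
  have heval0 := congrFun hzeq 0
  simp only [Pi.add_apply, Pi.smul_apply, smul_eq_mul] at heval0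
  rw [Pi.single_eq_of_ne (Ne.symm (Fin.succ_ne_zero j1)),
    Pi.single_eq_of_ne (Ne.symm (Fin.succ_ne_zero j0))] at heval0
  simp only [hcx, hcy, Fin.cons_zero] at heval0
  -- heval0 : 0 = a1 * 1 + (b1 * 1 + c1 * 0)
  have hevali2 := congrFun hzeq i2
  simp only [Pi.add_apply, Pi.smul_apply, smul_eq_mul] at hevali2
  rw [Pi.single_eq_of_ne h21, Pi.single_eq_of_ne h20, hi2, hcxsucc, hcysucc] at hevali2
  -- hevali2 : 0 = a1 * x j2 + (b1 * y j2 + c1 * 0)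
  have hb1 : b1 = -a1 := by linear_combination -heval0
  have ha1 : a1 = 0 := by
    rw [hb1] at hevali2
    have h2 : a1 * (x j2 - y j2) = 0 := by linear_combination -hevali2
    rcases mul_eq_zero.mp h2 with h3 | h3
    · exact h3
    · exact absurd h3 (sub_ne_zero.mpr hj2)
  have hevali1 := congrFun hzeq i1
  simp only [Pi.add_apply, Pi.smul_apply, smul_eq_mul] at hevali1
  rw [Pi.single_eq_same, Pi.single_eq_of_ne h10] at hevali1
  rw [ha1, hb1, ha1] at hevali1
  -- hevali1 : 1 = 0 * cx i1 + (-0 * cy i1 + c1 * 0)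
  simp at hevali1

end Main
end Stmt12Aux
namespace Stmt12Aux

section Final
variable {F : Type*} [Field F] [Fintype F] [DecidableEq F]

lemma lemA2 {m : ℕ} [Nonempty (PA F m)] (δ : PA F m) (c z : PA F m → F) (l l' : F)
    (h : ∃ r ∈ Rcomp δ, hammingDist z (c + r + Pi.single δ l) ≤ 1) :
    ∃ r' ∈ Rcomp δ, hammingDist z (c + r' + Pi.single δ l') ≤ 1 := by
  obtain ⟨r, hrR, hrd⟩ := h
  rw [hammingDist_comm, hammingDist_eq_hammingNorm, neg_add_eq_sub] at hrd
  obtain ⟨β, μ, hu⟩ := norm_le_one_decomp hrd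
  obtain ⟨r', hr'R, hr'n⟩ := lemA δ hrR l l' μ β
  refine ⟨r', hr'R, ?_⟩
  rw [hammingDist_comm, hammingDist_eq_hammingNorm, neg_add_eq_sub]
  have hz : z = c + r + Pi.single δ l + Pi.single β μ := by
    have : z - (c + r + Pi.single δ l) = Pi.single β μ := hu
    rw [← this]; abel
  have hexpr : z - (c + r' + Pi.single δ l') =
      r + Pi.single δ l + Pi.single β μ - (r' + Pi.single δ l') := by
    rw [hz]; abel
  rw [hexpr]
  exact hr'n

lemma lemA'1 {s : ℕ} (x : Fin s → F) (z : PA F (s+1) → F)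
    (h : ∃ r ∈ Rcomp (consProj x), hammingDist z (cword x + r) ≤ 1) :
    ∃ r ∈ Rcomp (consProj x),
      hammingDist z (cword x + r + Pi.single (consProj x) 1) ≤ 1 := by
  haveI : Nonempty (PA F (s+1)) := ⟨singleProj 0⟩
  refine lemA2 (consProj x) (cword x) z 0 1 ?_
  obtain ⟨r, hrR, hrd⟩ := h
  refine ⟨r, hrR, ?_⟩
  rw [Pi.single_zero, add_zero]
  exact hrd

lemma lemA'2 {s : ℕ} (x : Fin s → F) (z : PA F (s+1) → F)
    (h : ∃ r ∈ Rcomp (consProj x),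
      hammingDist z (cword x + r + Pi.single (consProj x) 1) ≤ 1) :
    ∃ r ∈ Rcomp (consProj x), hammingDist z (cword x + r) ≤ 1 := by
  haveI : Nonempty (PA F (s+1)) := ⟨singleProj 0⟩
  obtain ⟨r, hrR, hrd⟩ := lemA2 (consProj x) (cword x) z 1 0 h
  refine ⟨r, hrR, ?_⟩
  rw [Pi.single_zero, add_zero] at hrd
  exact hrd

end Final
end Stmt12Aux

open Stmt12Aux in
theorem stmt12' {F : Type*} [Field F] [Fintype F] [DecidableEq F] {s : ℕ}
    (C : Set (Fin s → F)) (hC : IsOneCode C) :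
    ∃ P : Set (PA F (s+1) → F), IsPerfect P ∧
      C = {x : Fin s → F | bar (Fin.cons 1 x) ∈ P} := by
  classical
  haveI : Nonempty (PA F (s+1)) := ⟨singleProj 0⟩
  set P : Set (PA F (s+1) → F) :=
    {z | (syn F (s+1) z = 0 ∧ ∀ x ∈ C, z - cword x ∉ Rcomp (consProj x)) ∨
         (∃ x ∈ C, z - (cword x + Pi.single (consProj x) 1) ∈ Rcomp (consProj x))} with hP
  have synR : ∀ (x : Fin s → F) (r : PA F (s+1) → F), r ∈ Rcomp (consProj x) →
      syn F (s+1) r = 0 := by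
    intro x r hr
    exact LinearMap.mem_ker.mp (Rcomp_le_ker (consProj x) hr)
  have synCR : ∀ (x : Fin s → F) (r : PA F (s+1) → F), r ∈ Rcomp (consProj x) →
      syn F (s+1) (cword x + r) = 0 := by
    intro x r hr
    rw [map_add, syn_cword, synR x r hr, add_zero]
  refine ⟨P, ?_, ?_⟩
  · -- Perfectness
    intro z
    obtain ⟨h, ⟨hh0, hhd⟩, hhu⟩ := Hperfect (F := F) (m := s+1) z
    by_cases hcase : ∃ x ∈ C, ∃ r ∈ Rcomp (consProj x), hammingDist z (cword x + r) ≤ 1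
    · obtain ⟨x0, hx0C, hInN0⟩ := hcase
      -- any other neighborhood-membership forces y = x0
      have hsame : ∀ y ∈ C,
          (∃ r ∈ Rcomp (consProj y), hammingDist z (cword y + r) ≤ 1) → y = x0 := by
        intro y hyC hInNy
        by_contra hne
        obtain ⟨ra, hraR, hrad⟩ := hInN0
        obtain ⟨rb, hrbR, hrbd⟩ := hInNy
        have e1 := hhu _ ⟨synCR x0 ra hraR, hrad⟩
        have e2 := hhu _ ⟨synCR y rb hrbR, hrbd⟩
        have heq : cword x0 + ra = cword y + rb := by rw [e1, e2]
        have hx0y : x0 ≠ y := fun h => hne h.symm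
        exact lemD (three_le_dist hx0y (hC x0 hx0C y hyC hx0y)) hraR hrbR heq
      obtain ⟨r1, hr1R, hr1d⟩ := lemA'1 x0 z hInN0
      set w0 : PA F (s+1) → F := cword x0 + r1 + Pi.single (consProj x0) 1 with hw0
      have hw0P : w0 ∈ P := by
        rw [hP]
        right
        refine ⟨x0, hx0C, ?_⟩
        have : w0 - (cword x0 + Pi.single (consProj x0) 1) = r1 := by rw [hw0]; abel
        rw [this]
        exact hr1R
      refine ⟨w0, ⟨hw0P, hr1d⟩, ?_⟩
      rintro w ⟨hwP, hwd⟩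
      rw [hP] at hwP
      rcases hwP with ⟨hw0', hwnot⟩ | ⟨y, hyC, hyR⟩
      · exfalso
        obtain ⟨ra, hraR, hrad⟩ := hInN0
        have e1 := hhu _ ⟨synCR x0 ra hraR, hrad⟩
        have e2 := hhu _ ⟨hw0', hwd⟩
        have : w = cword x0 + ra := by rw [e1, e2]
        apply hwnot x0 hx0C
        have hsub : w - cword x0 = ra := by rw [this]; abel
        rw [hsub]
        exact hraR
      · -- w is in a switched piece
        set r2 : PA F (s+1) → F := w - (cword y + Pi.single (consProj y) 1) with hr2
        have hwsplit : w = cword y + r2 + Pi.single (consProj y) 1 := by rw [hr2]; abel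
        have hInNy : ∃ r ∈ Rcomp (consProj y), hammingDist z (cword y + r) ≤ 1 := by
          apply lemA'2 y z
          exact ⟨r2, hyR, by rw [← hwsplit]; exact hwd⟩
        have hyx0 : y = x0 := hsame y hyC hInNy
        subst hyx0
        -- both w and w0 are in the same switched coset; use perfectness at z - e
        set e : PA F (s+1) → F := Pi.single (consProj y) 1 with he
        set z' : PA F (s+1) → F := z - e with hz'
        have hwe : w - e = cword y + r2 := by rw [hwsplit]; abel
        have hw0e : w0 - e = cword y + r1 := by rw [hw0]; abel
        have hd1 : hammingDist z' (w - e) ≤ 1 := by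
          rw [hammingDist_comm, hammingDist_eq_hammingNorm, neg_add_eq_sub, hz',
            sub_sub_sub_cancel_right, ← neg_add_eq_sub, ← hammingDist_eq_hammingNorm,
            hammingDist_comm]
          exact hwd
        have hd2 : hammingDist z' (w0 - e) ≤ 1 := by
          rw [hammingDist_comm, hammingDist_eq_hammingNorm, neg_add_eq_sub, hz',
            sub_sub_sub_cancel_right, ← neg_add_eq_sub, ← hammingDist_eq_hammingNorm,
            hammingDist_comm]
          exact hr1d
        obtain ⟨h', _, hu'⟩ := Hperfect (F := F) (m := s+1) z'
        have e1 := hu' _ ⟨by rw [hwe]; exact synCR y r2 hyR, hd1⟩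
        have e2 := hu' _ ⟨by rw [hw0e]; exact synCR y r1 hr1R, hd2⟩
        have : w - e = w0 - e := by rw [e1, e2]
        exact sub_left_inj.mp this
    · -- no neighborhood case: the Hamming codeword h works
      push_neg at hcase
      have hhP : h ∈ P := by
        rw [hP]
        left
        refine ⟨hh0, ?_⟩
        intro x hxC hmem
        have hlt := hcase x hxC (h - cword x) hmem
        have heq : cword x + (h - cword x) = h := by abel
        rw [heq] at hlt
        omega
      refine ⟨h, ⟨hhP, hhd⟩, ?_⟩
      rintro w ⟨hwP, hwd⟩
      rw [hP] at hwP
      rcases hwP with ⟨hw0', _⟩ | ⟨y, hyC, hyR⟩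
      · exact hhu _ ⟨hw0', hwd⟩
      · exfalso
        set r2 : PA F (s+1) → F := w - (cword y + Pi.single (consProj y) 1) with hr2
        have hwsplit : w = cword y + r2 + Pi.single (consProj y) 1 := by rw [hr2]; abel
        have hInNy : ∃ r ∈ Rcomp (consProj y), hammingDist z (cword y + r) ≤ 1 := by
          apply lemA'2 y z
          exact ⟨r2, hyR, by rw [← hwsplit]; exact hwd⟩
        obtain ⟨r, hrR, hrd⟩ := hInNy
        have hlt := hcase y hyC r hrR
        omega
  · -- the embedding property
    ext x
    simp only [Set.mem_setOf_eq]
    constructor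
    · intro hxC
      rw [hP]
      right
      refine ⟨x, hxC, ?_⟩
      have : bar (Fin.cons 1 x) - (cword x + Pi.single (consProj x) 1) = 0 := by
        rw [cword]; abel
      rw [this]
      exact Submodule.zero_mem _
    · intro hmem
      rw [hP] at hmem
      rcases hmem with ⟨h0, -⟩ | ⟨y, hyC, hyR⟩
      · exfalso
        rw [syn_bar] at h0
        have := congrFun h0 0
        rw [Fin.cons_zero] at this
        exact one_ne_zero this
      · have hsyn0 : syn F (s+1) (bar (Fin.cons 1 x) -
            (cword y + Pi.single (consProj y) 1)) = 0 := by
          have := Rcomp_le_ker (consProj y) hyR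
          exact LinearMap.mem_ker.mp this
        rw [map_sub, map_add, syn_bar, syn_cword, syn_single, coe_consProj, one_smul,
          zero_add, sub_eq_zero] at hsyn0
        have hxy : x = y := by
          funext j
          have := congrFun hsyn0 j.succ
          rwa [Fin.cons_succ, Fin.cons_succ] at this
        rw [hxy]
        exact hyC

theorem stmt12 {s : ℕ} (C : Set (Fin s → F)) (hC : IsOneCode C) :
    ∃ P : Set (PA F (s+1) → F), IsPerfect P ∧
      C = {x : Fin s → F | bar (Fin.cons 1 x) ∈ P} := by
  exact stmt12' C hC
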